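/- arXiv:2512.09902 — 5 statements merged into one kernel-verified Lean document; each statement's English description precedes it below -/
import Mathlib

section
/- With r ≥ 0 and Q c ≥ 0 for all c, the MaxU link-sharing allocation γ̃ is feasible: 0 ≤ γ̃ c ≤ Q c for every commodity c, and Σ_{c ∈ ι} γ̃ c ≤ r. -/
/-- With `r ≥ 0` and `Q c ≥ 0` for all `c`, the MaxU link-sharing
allocation `γt` (defined recursively along the antitone enumeration `σ` via the
residuals `ρ`) is feasible: `0 ≤ γt c ≤ Q c` for every commodity `c`, and
`∑ c, γt c ≤ r`. -/
theorem maxU_allocation_feasible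
    {ι : Type*} [Fintype ι] [Nonempty ι]
    (r : ℝ) (hr : 0 ≤ r)
    (Q U : ι → ℝ) (hQ : ∀ c, 0 ≤ Q c)
    (α : ι → ℝ) (hα : ∀ c, α c = if 0 < U c ∧ 0 < Q c then 1 else 0)
    (σ : Fin (Fintype.card ι) ≃ ι)
    (hsort : Antitone fun k => α (σ k) * U (σ k))
    (γt : ι → ℝ) (ρ : Fin (Fintype.card ι) → ℝ)
    (hρ : ∀ k, ρ k = max (r - ∑ m ∈ Finset.Iio k, γt (σ m)) 0)
    (hγt : ∀ k, γt (σ k) = min (α (σ k) * ρ k) (Q (σ k))) :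
    (∀ c, 0 ≤ γt c ∧ γt c ≤ Q c) ∧ ∑ c, γt c ≤ r := by
  have hα01 : ∀ c, α c = 0 ∨ α c = 1 := by
    intro c; rw [hα c]; split <;> simp
  have hρ0 : ∀ k, 0 ≤ ρ k := fun k => (hρ k) ▸ le_max_right _ _
  have hαρ : ∀ k, 0 ≤ α (σ k) * ρ k := by
    intro k
    rcases hα01 (σ k) with h | h <;> rw [h] <;> [simp; simpa using hρ0 k]
  have hγ0 : ∀ k, 0 ≤ γt (σ k) := by
    intro k; rw [hγt k]; exact le_min (hαρ k) (hQ _)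
  have hγρ : ∀ k, γt (σ k) ≤ ρ k := by
    intro k
    rw [hγt k]
    refine (min_le_left _ _).trans ?_
    rcases hα01 (σ k) with h | h <;> rw [h] <;> simp [hρ0 k]
  -- key invariant
  have key : ∀ (j : ℕ) (k : Fin (Fintype.card ι)), k.val ≤ j →
      ∑ m ∈ Finset.Iic k, γt (σ m) ≤ r := by
    intro j
    induction j with
    | zero =>
      intro k hk
      have h0 : Finset.Iio k = ∅ := by
        ext m; simp only [Finset.mem_Iio, Finset.notMem_empty, iff_false,
          Fin.lt_iff_val_lt_val]; omega
      have hIic : Finset.Iic k = {k} := by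
        ext m; simp only [Finset.mem_Iic, Finset.mem_singleton,
          Fin.le_iff_val_le_val, Fin.ext_iff]; omega
      rw [hIic, Finset.sum_singleton]
      refine (hγρ k).trans ?_
      rw [hρ k, h0]
      simp [hr]
    | succ j ih =>
      intro k hk
      have hIio : ∑ m ∈ Finset.Iio k, γt (σ m) ≤ r := by
        rcases Nat.eq_zero_or_pos k.val with h0 | hpos
        · have : Finset.Iio k = ∅ := by
            ext m; simp only [Finset.mem_Iio, Finset.notMem_empty, iff_false,
              Fin.lt_iff_val_lt_val]; omega
          simp [this, hr]
        · have hjlt : k.val - 1 < Fintype.card ι := lt_trans (by omega) k.isLt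
          have : Finset.Iio k = Finset.Iic ⟨k.val - 1, hjlt⟩ := by
            ext m
            simp only [Finset.mem_Iio, Finset.mem_Iic, Fin.lt_iff_val_lt_val,
              Fin.le_iff_val_le_val]
            omega
          rw [this]; exact ih _ (by simp; omega)
      have hsum : ∑ m ∈ Finset.Iic k, γt (σ m)
          = ∑ m ∈ Finset.Iio k, γt (σ m) + γt (σ k) := by
        rw [← Finset.Iio_insert, Finset.sum_insert (by simp), add_comm]
      rw [hsum]
      have : γt (σ k) ≤ r - ∑ m ∈ Finset.Iio k, γt (σ m) := by
        refine (hγρ k).trans ?_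
        rw [hρ k]
        exact max_le (le_refl _) (by linarith)
      linarith
  constructor
  · intro c
    have := hγ0 (σ.symm c)
    have h2 := hγt (σ.symm c)
    simp only [Equiv.apply_symm_apply] at this h2
    exact ⟨this, h2 ▸ min_le_right _ _⟩
  · have hcard : 0 < Fintype.card ι := Fintype.card_pos
    set L : Fin (Fintype.card ι) := ⟨Fintype.card ι - 1, by omega⟩
    have huniv : (Finset.univ : Finset (Fin (Fintype.card ι))) = Finset.Iic L := by
      ext m
      simp only [Finset.mem_univ, Finset.mem_Iic, Fin.le_iff_val_le_val, L, true_iff]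
      omega
    calc ∑ c, γt c = ∑ k, γt (σ k) := (Equiv.sum_comp σ γt).symm
      _ = ∑ m ∈ Finset.Iic L, γt (σ m) := by rw [huniv]
      _ ≤ r := key L L (le_refl _)
end

section
/- The total rate assigned by the MaxU link-sharing allocation either saturates the link capacity or exhausts all eligible queues: Σ_{c ∈ ι} γ̃ c = min r (Σ_{c : U c > 0 ∧ Q c > 0} Q c). -/
/-- Arithmetic core of the greedy water-filling step. -/
lemma maxU_step (r T q : ℝ) (hT : 0 ≤ T) (hq : 0 ≤ q) :
    min (max (r - min r T) 0) q + min r T = min r (T + q) := by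
  rcases le_total T r with h | h
  · have h1 : min r T = T := min_eq_right h
    have h2 : max (r - T) 0 = r - T := max_eq_left (by linarith)
    rw [h1, h2]
    rcases le_total (r - T) q with h3 | h3
    · rw [min_eq_left h3, min_eq_left (by linarith : r ≤ T + q)]; ring
    · rw [min_eq_right h3, min_eq_right (by linarith : T + q ≤ r)]; ring
  · have h1 : min r T = r := min_eq_left h
    have h2 : min r (T + q) = r := min_eq_left (by linarith)
    rw [h1, h2]
    simp [hq]

/-- The total rate assigned by the MaxU link-sharing allocation either
saturates the link capacity or exhausts all eligible queues:
`∑ c, γt c = min r (∑_{c : U c > 0 ∧ Q c > 0} Q c)`. -/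
theorem maxU_total_rate
    {ι : Type*} [Fintype ι] [Nonempty ι]
    (r : ℝ) (hr : 0 ≤ r)
    (Q U : ι → ℝ) (hQ : ∀ c, 0 ≤ Q c)
    (α : ι → ℝ) (hα : ∀ c, α c = if 0 < U c ∧ 0 < Q c then 1 else 0)
    (σ : Fin (Fintype.card ι) ≃ ι)
    (hsort : Antitone fun k => α (σ k) * U (σ k))
    (γt : ι → ℝ) (ρ : Fin (Fintype.card ι) → ℝ)
    (hρ : ∀ k, ρ k = max (r - ∑ m ∈ Finset.Iio k, γt (σ m)) 0)
    (hγt : ∀ k, γt (σ k) = min (α (σ k) * ρ k) (Q (σ k))) :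
    ∑ c, γt c = min r (∑ c ∈ Finset.univ.filter (fun c => 0 < U c ∧ 0 < Q c), Q c) := by
  classical
  have key : ∀ k : ℕ, k ≤ Fintype.card ι →
      ∑ m ∈ Finset.univ.filter (fun m : Fin (Fintype.card ι) => (m : ℕ) < k), γt (σ m)
        = min r (∑ m ∈ Finset.univ.filter
            (fun m : Fin (Fintype.card ι) => (m : ℕ) < k ∧ (0 < U (σ m) ∧ 0 < Q (σ m))),
            Q (σ m)) := by
    intro k
    induction k with
    | zero =>
      intro _
      simp [min_eq_right hr]
    | succ k ih =>
      intro hk1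
      have hkn : k < Fintype.card ι := hk1
      have ihk := ih (le_of_lt hkn)
      set j : Fin (Fintype.card ι) := ⟨k, hkn⟩ with hj
      have hjk : (j : ℕ) = k := rfl
      have hsplit : (Finset.univ.filter (fun m : Fin (Fintype.card ι) => (m : ℕ) < k + 1))
          = insert j (Finset.univ.filter (fun m : Fin (Fintype.card ι) => (m : ℕ) < k)) := by
        ext m
        simp only [Finset.mem_filter, Finset.mem_univ, true_and, Finset.mem_insert,
          Nat.lt_succ_iff_lt_or_eq, Fin.ext_iff, hjk]
        tauto
      have hjnot : j ∉ Finset.univ.filter (fun m : Fin (Fintype.card ι) => (m : ℕ) < k) := by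
        simp [hjk]
      have hIio : Finset.Iio j
          = Finset.univ.filter (fun m : Fin (Fintype.card ι) => (m : ℕ) < k) := by
        ext m
        simp [Finset.mem_Iio, Fin.lt_def, hjk]
      have hρj : ρ j = max (r - min r (∑ m ∈ Finset.univ.filter
          (fun m : Fin (Fintype.card ι) => (m : ℕ) < k ∧ (0 < U (σ m) ∧ 0 < Q (σ m))),
          Q (σ m))) 0 := by
        rw [hρ j, hIio, ihk]
      have hTnn : 0 ≤ ∑ m ∈ Finset.univ.filter
          (fun m : Fin (Fintype.card ι) => (m : ℕ) < k ∧ (0 < U (σ m) ∧ 0 < Q (σ m))),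
          Q (σ m) :=
        Finset.sum_nonneg fun m _ => hQ _
      rw [hsplit, Finset.sum_insert hjnot, ihk]
      by_cases hE : 0 < U (σ j) ∧ 0 < Q (σ j)
      · -- eligible
        have hα1 : α (σ j) = 1 := by rw [hα]; simp [hE]
        have hsplit2 : (Finset.univ.filter
            (fun m : Fin (Fintype.card ι) => (m : ℕ) < k + 1 ∧ (0 < U (σ m) ∧ 0 < Q (σ m))))
            = insert j (Finset.univ.filter
              (fun m : Fin (Fintype.card ι) => (m : ℕ) < k ∧ (0 < U (σ m) ∧ 0 < Q (σ m)))) := by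
          ext m
          simp only [Finset.mem_filter, Finset.mem_univ, true_and, Finset.mem_insert,
            Nat.lt_succ_iff_lt_or_eq, Fin.ext_iff, hjk]
          constructor
          · rintro ⟨h1 | h1, h2⟩
            · exact Or.inr ⟨h1, h2⟩
            · exact Or.inl h1
          · rintro (h1 | ⟨h1, h2⟩)
            · have hm : m = j := Fin.ext h1
              exact ⟨Or.inr h1, hm ▸ hE⟩
            · exact ⟨Or.inl h1, h2⟩
        have hjnot2 : j ∉ Finset.univ.filter
            (fun m : Fin (Fintype.card ι) => (m : ℕ) < k ∧ (0 < U (σ m) ∧ 0 < Q (σ m))) := by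
          simp [hjk]
        rw [hsplit2, Finset.sum_insert hjnot2, hγt j, hα1, one_mul, hρj]
        rw [add_comm (Q (σ j))]
        exact maxU_step r _ _ hTnn (hQ _)
      · -- not eligible
        have hα0 : α (σ j) = 0 := by rw [hα]; simp [hE]
        have hγ0 : γt (σ j) = 0 := by
          rw [hγt j, hα0, zero_mul]
          exact min_eq_left (hQ _)
        have hsame : (Finset.univ.filter
            (fun m : Fin (Fintype.card ι) => (m : ℕ) < k + 1 ∧ (0 < U (σ m) ∧ 0 < Q (σ m))))
            = Finset.univ.filter
              (fun m : Fin (Fintype.card ι) => (m : ℕ) < k ∧ (0 < U (σ m) ∧ 0 < Q (σ m))) := by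
          ext m
          simp only [Finset.mem_filter, Finset.mem_univ, true_and, Nat.lt_succ_iff_lt_or_eq]
          constructor
          · rintro ⟨h1 | h1, h2⟩
            · exact ⟨h1, h2⟩
            · exact absurd ((Fin.ext h1 : m = j) ▸ h2) hE
          · rintro ⟨h1, h2⟩; exact ⟨Or.inl h1, h2⟩
        rw [hγ0, zero_add, hsame]
  have hfull := key (Fintype.card ι) le_rfl
  have hL : (Finset.univ.filter (fun m : Fin (Fintype.card ι) => (m : ℕ) < Fintype.card ι))
      = Finset.univ := by
    ext m; simp [m.isLt]
  rw [hL] at hfull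
  have hLHS : ∑ c, γt c = ∑ m : Fin (Fintype.card ι), γt (σ m) := (Equiv.sum_comp σ γt).symm
  have hRHS : ∑ m ∈ Finset.univ.filter
      (fun m : Fin (Fintype.card ι) => (m : ℕ) < Fintype.card ι ∧ (0 < U (σ m) ∧ 0 < Q (σ m))),
      Q (σ m)
      = ∑ c ∈ Finset.univ.filter (fun c => 0 < U c ∧ 0 < Q c), Q c := by
    rw [Finset.sum_filter, Finset.sum_filter]
    rw [← Equiv.sum_comp σ (fun c => if 0 < U c ∧ 0 < Q c then Q c else 0)]
    apply Finset.sum_congr rfl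
    intro m _
    simp [m.isLt]
  rw [hLHS, hfull, hRHS]
end

section
/- Per-link optimality of the MaxU allocation (fractional-knapsack optimality of the greedy link-sharing rule): for every rate assignment γ : ι → ℝ satisfying 0 ≤ γ c ≤ Q c for all c and Σ_{c ∈ ι} γ c ≤ r, one has Σ_{c ∈ ι} γ c * U c ≤ Σ_{c ∈ ι} γ̃ c * U c. -/
lemma maxU_abel_aux (u v : ℕ → ℝ) (hv0 : ∀ k, 0 ≤ v k) (hva : ∀ k, v (k+1) ≤ v k)
    (hD : ∀ k, 0 ≤ ∑ m ∈ Finset.range k, u m) (n : ℕ) :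
    0 ≤ ∑ k ∈ Finset.range n, u k * v k := by
  have key : ∀ N, ∑ k ∈ Finset.range N, u k * v k
      = (∑ k ∈ Finset.range N, (∑ m ∈ Finset.range (k+1), u m) * (v k - v (k+1)))
        + (∑ m ∈ Finset.range N, u m) * v N := by
    intro N
    induction N with
    | zero => simp
    | succ N ih =>
      rw [Finset.sum_range_succ, ih,
        Finset.sum_range_succ (fun k => (∑ m ∈ Finset.range (k+1), u m) * (v k - v (k+1))),
        Finset.sum_range_succ u]
      ring
  rw [key]
  apply add_nonneg
  · exact Finset.sum_nonneg fun k _ => mul_nonneg (hD _) (sub_nonneg.2 (hva k))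
  · exact mul_nonneg (hD n) (hv0 n)

lemma maxU_Iio_aux {n : ℕ} (k : Fin n) (F : Fin n → ℝ) (G : ℕ → ℝ)
    (h : ∀ m : Fin n, G m.val = F m) :
    ∑ m ∈ Finset.Iio k, F m = ∑ m ∈ Finset.range k.val, G m := by
  refine Finset.sum_bij' (fun (m : Fin n) _ => (m : ℕ))
    (fun m hm => (⟨m, lt_trans (Finset.mem_range.1 hm) k.2⟩ : Fin n)) ?_ ?_ ?_ ?_ ?_
  all_goals intro a ha
  · simp only [Finset.mem_range]
    exact Fin.lt_iff_val_lt_val.mp (Finset.mem_Iio.1 ha)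
  · simp only [Finset.mem_Iio, Fin.lt_iff_val_lt_val]
    exact Finset.mem_range.1 ha
  · simp
  · simp
  · exact (h a).symm

noncomputable def maxUdext {ι : Type*} (n : ℕ) (σ : Fin n ≃ ι) (x : ι → ℝ) (k : ℕ) : ℝ :=
  if h : k < n then x (σ ⟨k, h⟩) else 0

lemma maxUdext_lt {ι : Type*} {n : ℕ} (σ : Fin n ≃ ι) (x : ι → ℝ) {k : ℕ} (h : k < n) :
    maxUdext n σ x k = x (σ ⟨k, h⟩) := dif_pos h

lemma maxUdext_ge {ι : Type*} {n : ℕ} (σ : Fin n ≃ ι) (x : ι → ℝ) {k : ℕ} (h : ¬ k < n) :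
    maxUdext n σ x k = 0 := dif_neg h

lemma maxUdext_nonneg {ι : Type*} {n : ℕ} (σ : Fin n ≃ ι) {x : ι → ℝ} (hx : ∀ c, 0 ≤ x c)
    (k : ℕ) : 0 ≤ maxUdext n σ x k := by
  unfold maxUdext; split_ifs; exacts [hx _, le_refl 0]

lemma maxUdext_sum {ι : Type*} [Fintype ι] {n : ℕ} (σ : Fin n ≃ ι) (x : ι → ℝ) :
    ∑ k ∈ Finset.range n, maxUdext n σ x k = ∑ c, x c := by
  rw [← Fin.sum_univ_eq_sum_range (fun k => maxUdext n σ x k) n, ← Equiv.sum_comp σ x]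
  refine Finset.sum_congr rfl fun i _ => ?_
  rw [maxUdext_lt σ x i.2, Fin.eta]

lemma maxUdext_partial {ι : Type*} [Fintype ι] {n : ℕ} (σ : Fin n ≃ ι) {x : ι → ℝ}
    (hx : ∀ c, 0 ≤ x c) (k : ℕ) :
    ∑ m ∈ Finset.range k, maxUdext n σ x m ≤ ∑ c, x c := by
  calc ∑ m ∈ Finset.range k, maxUdext n σ x m
      ≤ ∑ m ∈ Finset.range (max k n), maxUdext n σ x m :=
        Finset.sum_le_sum_of_subset_of_nonneg
          (Finset.range_subset_range.2 (le_max_left _ _)) (fun m _ _ => maxUdext_nonneg σ hx m)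
    _ = ∑ m ∈ Finset.range n, maxUdext n σ x m := by
        refine (Finset.sum_subset (Finset.range_subset_range.2 (le_max_right _ _)) ?_).symm
        intro m _ hm
        exact maxUdext_ge σ x (fun h => hm (Finset.mem_range.2 h))
    _ = ∑ c, x c := maxUdext_sum σ x

/-- Per-link optimality of the MaxU allocation (fractional-knapsack
optimality of the greedy link-sharing rule): for every rate assignment `γ` satisfying
`0 ≤ γ c ≤ Q c` for all `c` and `∑ c, γ c ≤ r`, one has
`∑ c, γ c * U c ≤ ∑ c, γt c * U c`. -/
theorem maxU_per_link_optimal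
    {ι : Type*} [Fintype ι] [Nonempty ι]
    (r : ℝ) (hr : 0 ≤ r)
    (Q U : ι → ℝ) (hQ : ∀ c, 0 ≤ Q c)
    (α : ι → ℝ) (hα : ∀ c, α c = if 0 < U c ∧ 0 < Q c then 1 else 0)
    (σ : Fin (Fintype.card ι) ≃ ι)
    (hsort : Antitone fun k => α (σ k) * U (σ k))
    (γt : ι → ℝ) (ρ : Fin (Fintype.card ι) → ℝ)
    (hρ : ∀ k, ρ k = max (r - ∑ m ∈ Finset.Iio k, γt (σ m)) 0)
    (hγt : ∀ k, γt (σ k) = min (α (σ k) * ρ k) (Q (σ k))) :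
    ∀ γ : ι → ℝ, (∀ c, 0 ≤ γ c ∧ γ c ≤ Q c) → ∑ c, γ c ≤ r →
      ∑ c, γ c * U c ≤ ∑ c, γt c * U c := by
  classical
  intro γ hγ hγr
  -- basic facts about α
  have hα01 : ∀ c, α c = 0 ∨ α c = 1 := by
    intro c; rw [hα]; split_ifs
    all_goals simp
  have hαnn : ∀ c, 0 ≤ α c := by
    intro c; rcases hα01 c with h | h <;> rw [h] <;> norm_num
  have hα1 : ∀ c, α c = 1 → 0 < U c ∧ 0 < Q c := by
    intro c h; rw [hα] at h; by_contra hc; rw [if_neg hc] at h; norm_num at h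
  have hα0 : ∀ c, α c = 0 → ¬(0 < U c ∧ 0 < Q c) := by
    intro c h; rw [hα] at h; by_contra hc; rw [if_pos hc] at h; norm_num at h
  -- ℕ-indexed data
  set v : ℕ → ℝ := maxUdext (Fintype.card ι) σ (fun c => α c * U c) with hvdef
  set g : ℕ → ℝ := maxUdext (Fintype.card ι) σ γt with hgdef
  set f : ℕ → ℝ := maxUdext (Fintype.card ι) σ (fun c => if α c = 1 then γ c else 0) with hfdef
  set t : ℕ → ℝ := maxUdext (Fintype.card ι) σ (fun c => α c * Q c) with htdef
  -- greedy recursion in ℕ form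
  have hγtσ : ∀ (k : ℕ) (h : k < Fintype.card ι), γt (σ ⟨k, h⟩) =
      min (α (σ ⟨k, h⟩) * max (r - ∑ m ∈ Finset.range k, g m) 0) (Q (σ ⟨k, h⟩)) := by
    intro k h
    rw [hγt ⟨k, h⟩, hρ ⟨k, h⟩,
      maxU_Iio_aux (⟨k, h⟩ : Fin (Fintype.card ι)) (fun m => γt (σ m)) g
        (fun m => by rw [hgdef, maxUdext_lt σ γt m.2, Fin.eta])]
  -- prefix sums of greedy equal min r (prefix of t)
  have hG : ∀ k, ∑ m ∈ Finset.range k, g m = min r (∑ m ∈ Finset.range k, t m) := by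
    intro k
    induction k with
    | zero => simp [min_eq_right hr]
    | succ k ih =>
      rw [Finset.sum_range_succ, Finset.sum_range_succ, ih]
      by_cases h : k < Fintype.card ι
      · set c := σ ⟨k, h⟩ with hc
        have hgk : g k = min (α c * max (r - min r (∑ m ∈ Finset.range k, t m)) 0) (Q c) := by
          rw [hgdef, maxUdext_lt σ γt h, hγtσ k h, ih]
        have htk : t k = α c * Q c := by rw [htdef, maxUdext_lt σ _ h]
        set T := ∑ m ∈ Finset.range k, t m with hT
        have hQc := hQ c
        rcases hα01 c with ha | ha
        · rw [hgk, ha, htk, ha]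
          simp [min_eq_left hQc]
        · rw [hgk, ha, htk, ha, one_mul, one_mul]
          rcases le_total r T with h1 | h1
          · rw [min_eq_left h1, sub_self, max_self, min_eq_left hQc,
              min_eq_left (by linarith)]
            ring
          · rw [min_eq_right h1, max_eq_left (by linarith)]
            rcases le_total (r - T) (Q c) with h2 | h2
            · rw [min_eq_left h2, min_eq_left (by linarith)]; ring
            · rw [min_eq_right h2, min_eq_right (by linarith)]
      · have hgk : g k = 0 := by rw [hgdef]; exact maxUdext_ge σ _ h
        have htk : t k = 0 := by rw [htdef]; exact maxUdext_ge σ _ h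
        rw [hgk, htk]; ring_nf
  -- prefix sums of f are dominated
  have hFG : ∀ k, ∑ m ∈ Finset.range k, f m ≤ ∑ m ∈ Finset.range k, g m := by
    intro k
    rw [hG k]
    refine le_min ?_ ?_
    · calc ∑ m ∈ Finset.range k, f m
          ≤ ∑ c, (if α c = 1 then γ c else 0) := by
            rw [hfdef]
            exact maxUdext_partial σ (fun c => by split_ifs; exacts [(hγ c).1, le_refl 0]) k
        _ ≤ ∑ c, γ c := Finset.sum_le_sum fun c _ => by
            split_ifs; exacts [le_refl _, (hγ c).1]
        _ ≤ r := hγr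
    · refine Finset.sum_le_sum fun m _ => ?_
      by_cases h : m < Fintype.card ι
      · rw [hfdef, htdef, maxUdext_lt σ _ h, maxUdext_lt σ _ h]
        rcases hα01 (σ ⟨m, h⟩) with ha | ha
        · rw [ha, if_neg (by norm_num), zero_mul]
        · rw [ha, if_pos rfl, one_mul]; exact (hγ _).2
      · rw [hfdef, htdef, maxUdext_ge σ _ h, maxUdext_ge σ _ h]
  -- properties of v
  have hv0 : ∀ k, 0 ≤ v k := by
    intro k
    refine maxUdext_nonneg σ (fun c => ?_) k
    rcases hα01 c with ha | ha
    · rw [ha, zero_mul]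
    · rw [ha, one_mul]; exact (hα1 c ha).1.le
  have hva : ∀ k, v (k + 1) ≤ v k := by
    intro k
    by_cases h1 : k + 1 < Fintype.card ι
    · have h0 : k < Fintype.card ι := by omega
      rw [hvdef, maxUdext_lt σ _ h1, maxUdext_lt σ _ h0]
      have := hsort (show (⟨k, h0⟩ : Fin (Fintype.card ι)) ≤ ⟨k + 1, h1⟩ by
        simp [Fin.le_def])
      simpa using this
    · rw [hvdef, maxUdext_ge σ _ h1]
      exact hv0 k
  -- the three sum comparisons
  have e1 : ∑ c, γt c * U c = ∑ k ∈ Finset.range (Fintype.card ι), g k * v k := by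
    rw [← maxUdext_sum σ (fun c => γt c * U c)]
    refine Finset.sum_congr rfl fun k hk => ?_
    have h : k < Fintype.card ι := Finset.mem_range.1 hk
    rw [maxUdext_lt σ _ h, hvdef, hgdef, maxUdext_lt σ _ h, maxUdext_lt σ _ h]
    rcases hα01 (σ ⟨k, h⟩) with ha | ha
    · have : γt (σ ⟨k, h⟩) = 0 := by
        rw [hγt ⟨k, h⟩, ha, zero_mul, min_eq_left (hQ _)]
      rw [this]; ring
    · rw [ha]; ring
  have e2 : ∑ c, γ c * U c ≤ ∑ k ∈ Finset.range (Fintype.card ι), f k * v k := by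
    rw [← maxUdext_sum σ (fun c => γ c * U c)]
    refine Finset.sum_le_sum fun k hk => ?_
    have h : k < Fintype.card ι := Finset.mem_range.1 hk
    rw [maxUdext_lt σ _ h, hvdef, hfdef, maxUdext_lt σ _ h, maxUdext_lt σ _ h]
    set c := σ ⟨k, h⟩ with hc
    rcases hα01 c with ha | ha
    · have h0 : (if α c = 1 then γ c else 0) * (α c * U c) = 0 := by
        rw [ha]; norm_num
      rw [h0]
      rcases not_and_or.1 (hα0 c ha) with hu | hq
      · exact mul_nonpos_of_nonneg_of_nonpos (hγ c).1 (not_lt.1 hu)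
      · have : γ c = 0 := le_antisymm (le_trans (hγ c).2 (not_lt.1 hq)) (hγ c).1
        rw [this, zero_mul]
    · rw [ha, if_pos rfl, one_mul]
  have e3 : ∑ k ∈ Finset.range (Fintype.card ι), f k * v k ≤ ∑ k ∈ Finset.range (Fintype.card ι), g k * v k := by
    have h0 := maxU_abel_aux (fun k => g k - f k) v hv0 hva
      (fun k => by rw [Finset.sum_sub_distrib]; linarith [hFG k]) (Fintype.card ι)
    have h1 : ∑ k ∈ Finset.range (Fintype.card ι), (g k - f k) * v k
        = ∑ k ∈ Finset.range (Fintype.card ι), g k * v k - ∑ k ∈ Finset.range (Fintype.card ι), f k * v k := by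
      rw [← Finset.sum_sub_distrib]
      exact Finset.sum_congr rfl fun k _ => by ring
    linarith [h1 ▸ h0]
  calc ∑ c, γ c * U c ≤ ∑ k ∈ Finset.range (Fintype.card ι), f k * v k := e2
    _ ≤ ∑ k ∈ Finset.range (Fintype.card ι), g k * v k := e3
    _ = ∑ c, γt c * U c := e1.symm
end

section
/- Per-link utility dominance of MaxU over classic SP-BP: suppose the maximizer c* of U is the first element of the MaxU enumeration (σ 0 = c*). Then the link utility of the MaxU allocation is at least that of the classic exclusive allocation: Σ_{c ∈ ι} γ̃ c * max (U c) 0 ≥ Σ_{c ∈ ι} γ̂ c * max (U c) 0. -/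
/-- Per-link utility dominance of MaxU over classic SP-BP: if the
maximizer `cstar` of `U` is the first element of the MaxU enumeration (`σ 0 = cstar`),
then the link utility of the MaxU allocation is at least that of the classic exclusive
allocation: `∑ c, γt c * max (U c) 0 ≥ ∑ c, γh c * max (U c) 0`. -/
theorem maxU_utility_dominates_classic
    {ι : Type*} [Fintype ι] [Nonempty ι] [DecidableEq ι]
    (r : ℝ) (hr : 0 ≤ r)
    (Q U : ι → ℝ) (hQ : ∀ c, 0 ≤ Q c)
    (cstar : ι) (hcstar : ∀ c, U c ≤ U cstar)
    (γh : ι → ℝ)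
    (hγh : ∀ c, γh c = if c = cstar ∧ 0 < U cstar then min r (Q c) else 0)
    (α : ι → ℝ) (hα : ∀ c, α c = if 0 < U c ∧ 0 < Q c then 1 else 0)
    (σ : Fin (Fintype.card ι) ≃ ι)
    (hsort : Antitone fun k => α (σ k) * U (σ k))
    (γt : ι → ℝ) (ρ : Fin (Fintype.card ι) → ℝ)
    (hρ : ∀ k, ρ k = max (r - ∑ m ∈ Finset.Iio k, γt (σ m)) 0)
    (hγt : ∀ k, γt (σ k) = min (α (σ k) * ρ k) (Q (σ k)))
    (h0 : σ ⟨0, Fintype.card_pos⟩ = cstar) :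
    ∑ c, γh c * max (U c) 0 ≤ ∑ c, γt c * max (U c) 0 := by

  have hγt0 : ∀ c, 0 ≤ γt c := by
    intro c
    obtain ⟨k, rfl⟩ := σ.surjective c
    rw [hγt]
    refine le_min (mul_nonneg ?_ ?_) (hQ _)
    · rw [hα]; split_ifs <;> norm_num
    · rw [hρ]; exact le_max_right _ _
  have hterm : ∀ c, 0 ≤ γt c * max (U c) 0 :=
    fun c => mul_nonneg (hγt0 c) (le_max_right _ _)
  have hL : ∑ c, γh c * max (U c) 0 = γh cstar * max (U cstar) 0 := by
    refine Finset.sum_eq_single cstar (fun c _ hc => ?_) (fun h => absurd (Finset.mem_univ _) h)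
    rw [hγh]; simp [hc]
  rw [hL]
  have key : γh cstar * max (U cstar) 0 ≤ γt cstar * max (U cstar) 0 := by
    by_cases hU : 0 < U cstar
    · have hρ0 : ρ ⟨0, Fintype.card_pos⟩ = r := by
        rw [hρ]
        have : ∑ m ∈ Finset.Iio (⟨0, Fintype.card_pos⟩ : Fin (Fintype.card ι)), γt (σ m) = 0 := by
          refine Finset.sum_eq_zero fun m hm => absurd (Finset.mem_Iio.mp hm) ?_
          simp [Fin.lt_def]
        rw [this, sub_zero, max_eq_left hr]
      have hγtc : γt cstar = min (α cstar * r) (Q cstar) := by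
        rw [← h0, hγt, hρ0, h0]
      have heq : γh cstar = γt cstar := by
        rw [hγh, hγtc, hα]
        by_cases hQc : 0 < Q cstar
        · simp [hU, hQc]
        · have : Q cstar = 0 := le_antisymm (not_lt.mp hQc) (hQ cstar)
          simp [hU, hQc, this, min_eq_right hr]
      rw [heq]
    · have : γh cstar = 0 := by rw [hγh]; simp [hU]
      rw [this, zero_mul]
      exact hterm cstar
  exact key.trans (Finset.single_le_sum (fun c _ => hterm c) (Finset.mem_univ _))
end

section
/- Deterministic single-slot objective dominance of MaxU SP-BP over classic SP-BP (core of Theorem 1): for each link e, suppose σ_e 0 = c*_e, and set ŵ e = Σ_{c ∈ ι} γ̂_e c * max (U_e c) 0 and w̃ e = Σ_{c ∈ ι} γ̃_e c * max (U_e c) 0. Let Ŝ be an independent set of G maximizing Σ_{e ∈ S} ŵ e over independent sets S, and let S̃ be an independent set maximizing Σ_{e ∈ S} w̃ e. Then the final MaxU rate assignments μ̃_e c = γ̃_e c (for e ∈ S̃, else 0) and classic assignments μ̂_e c = γ̂_e c (for e ∈ Ŝ, else 0) satisfy Σ_{e ∈ E} Σ_{c ∈ ι} μ̃_e c * U_e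 c ≥ Σ_{e ∈ E} Σ_{c ∈ ι} μ̂_e c * U_e c. -/
/-- Deterministic single-slot objective dominance of MaxU SP-BP over
classic SP-BP (core of Theorem 1): for each link `e`, suppose the per-link maximizer
`cstar e` of `U e` is the first element of the MaxU enumeration `σ e`, and set
`wh e = ∑ c, γh e c * max (U e c) 0` and `wt e = ∑ c, γt e c * max (U e c) 0`.
Let `Sh` be an independent set of the conflict graph `G` maximizing `∑ e ∈ S, wh e`
over independent sets `S`, and let `St` be an independent set maximizing
`∑ e ∈ S, wt e`. Then the final MaxU rate assignments `μt e c = γt e c` (for `e ∈ St`,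
else `0`) and classic assignments `μh e c = γh e c` (for `e ∈ Sh`, else `0`) satisfy
`∑ e, ∑ c, μt e c * U e c ≥ ∑ e, ∑ c, μh e c * U e c`. -/
theorem maxU_SPBP_objective_dominates_classic
    {E ι : Type*} [Fintype E] [DecidableEq E] [Fintype ι] [Nonempty ι] [DecidableEq ι]
    (G : SimpleGraph E)
    (r : E → ℝ) (hr : ∀ e, 0 ≤ r e)
    (Q U : E → ι → ℝ) (hQ : ∀ e c, 0 ≤ Q e c)
    (cstar : E → ι) (hcstar : ∀ e c, U e c ≤ U e (cstar e))
    (γh : E → ι → ℝ)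
    (hγh : ∀ e c, γh e c =
      if c = cstar e ∧ 0 < U e (cstar e) then min (r e) (Q e c) else 0)
    (α : E → ι → ℝ) (hα : ∀ e c, α e c = if 0 < U e c ∧ 0 < Q e c then 1 else 0)
    (σ : E → (Fin (Fintype.card ι) ≃ ι))
    (hsort : ∀ e, Antitone fun k => α e (σ e k) * U e (σ e k))
    (h0 : ∀ e, σ e ⟨0, Fintype.card_pos⟩ = cstar e)
    (γt : E → ι → ℝ) (ρ : E → Fin (Fintype.card ι) → ℝ)
    (hρ : ∀ e k, ρ e k = max (r e - ∑ m ∈ Finset.Iio k, γt e (σ e m)) 0)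
    (hγt : ∀ e k, γt e (σ e k) = min (α e (σ e k) * ρ e k) (Q e (σ e k)))
    (wh wt : E → ℝ)
    (hwh : ∀ e, wh e = ∑ c, γh e c * max (U e c) 0)
    (hwt : ∀ e, wt e = ∑ c, γt e c * max (U e c) 0)
    (Sh St : Finset E)
    (hShInd : ∀ a ∈ Sh, ∀ b ∈ Sh, ¬ G.Adj a b)
    (hStInd : ∀ a ∈ St, ∀ b ∈ St, ¬ G.Adj a b)
    (hShMax : ∀ S : Finset E, (∀ a ∈ S, ∀ b ∈ S, ¬ G.Adj a b) →
      ∑ e ∈ S, wh e ≤ ∑ e ∈ Sh, wh e)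
    (hStMax : ∀ S : Finset E, (∀ a ∈ S, ∀ b ∈ S, ¬ G.Adj a b) →
      ∑ e ∈ S, wt e ≤ ∑ e ∈ St, wt e)
    (μt μh : E → ι → ℝ)
    (hμt : ∀ e c, μt e c = if e ∈ St then γt e c else 0)
    (hμh : ∀ e c, μh e c = if e ∈ Sh then γh e c else 0) :
    ∑ e, ∑ c, μh e c * U e c ≤ ∑ e, ∑ c, μt e c * U e c := by
  classical
  set z : Fin (Fintype.card ι) := ⟨0, Fintype.card_pos⟩ with hz
  have hρ0 : ∀ e, ρ e z = r e := by
    intro e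
    have hempty : (∑ m ∈ Finset.Iio z, γt e (σ e m)) = 0 := by
      apply Finset.sum_eq_zero
      intro m hm
      exact absurd (Finset.mem_Iio.mp hm) (by simp [hz, Fin.lt_def])
    rw [hρ, hempty, sub_zero, max_eq_left (hr e)]
  have hγt_nonneg : ∀ e c, 0 ≤ γt e c := by
    intro e c
    have hc : σ e ((σ e).symm c) = c := (σ e).apply_symm_apply c
    rw [← hc, hγt]
    refine le_min (mul_nonneg ?_ ?_) (hQ _ _)
    · rw [hα]; split <;> norm_num
    · rw [hρ]; exact le_max_right _ _
  have hγh_nonneg : ∀ e c, 0 ≤ γh e c := by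
    intro e c
    rw [hγh]
    split
    · exact le_min (hr e) (hQ e c)
    · exact le_refl 0
  have hγt_mul : ∀ e c, γt e c * U e c = γt e c * max (U e c) 0 := by
    intro e c
    rcases lt_or_ge 0 (U e c) with h | h
    · rw [max_eq_left h.le]
    · have hc : σ e ((σ e).symm c) = c := (σ e).apply_symm_apply c
      have hzero : γt e c = 0 := by
        rw [← hc, hγt, hα, hc, if_neg (by rintro ⟨h1, _⟩; linarith), zero_mul]
        exact min_eq_left (hQ _ _)
      rw [hzero, zero_mul, zero_mul]
  have hγh_mul : ∀ e c, γh e c * U e c = γh e c * max (U e c) 0 := by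
    intro e c
    rw [hγh]
    split
    · rename_i hcond
      rw [hcond.1, max_eq_left (le_of_lt hcond.2)]
    · rw [zero_mul, zero_mul]
  have key : ∀ e, wh e ≤ wt e := by
    intro e
    have hwh' : wh e = γh e (cstar e) * max (U e (cstar e)) 0 := by
      rw [hwh]
      apply Finset.sum_eq_single
      · intro c _ hne
        rw [hγh, if_neg (fun h => hne h.1), zero_mul]
      · intro h; exact absurd (Finset.mem_univ _) h
    have hwt_ge : γt e (cstar e) * max (U e (cstar e)) 0 ≤ wt e := by
      rw [hwt]
      exact Finset.single_le_sum
        (fun c _ => mul_nonneg (hγt_nonneg e c) (le_max_right _ _))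
        (Finset.mem_univ _)
    have hγle : γh e (cstar e) ≤ γt e (cstar e) := by
      rw [hγh]
      split
      · rename_i hcond
        rcases lt_or_ge 0 (Q e (cstar e)) with hQpos | hQle
        · have : γt e (cstar e) = min (r e) (Q e (cstar e)) := by
            rw [← h0 e, hγt, hα, h0 e, hρ0, if_pos ⟨hcond.2, hQpos⟩, one_mul]
          rw [this]
        · have hQ0 : Q e (cstar e) = 0 := le_antisymm hQle (hQ e (cstar e))
          rw [hQ0, min_eq_right (hr e)]
          exact hγt_nonneg e (cstar e)
      · exact hγt_nonneg e (cstar e)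
    calc wh e = γh e (cstar e) * max (U e (cstar e)) 0 := hwh'
      _ ≤ γt e (cstar e) * max (U e (cstar e)) 0 :=
          mul_le_mul_of_nonneg_right hγle (le_max_right _ _)
      _ ≤ wt e := hwt_ge
  have hlhs : ∑ e, ∑ c, μh e c * U e c = ∑ e ∈ Sh, wh e := by
    calc ∑ e, ∑ c, μh e c * U e c
        = ∑ e, (if e ∈ Sh then wh e else 0) := by
          apply Finset.sum_congr rfl
          intro e _
          by_cases h : e ∈ Sh
          · rw [if_pos h, hwh]
            apply Finset.sum_congr rfl
            intro c _
            rw [hμh, if_pos h, hγh_mul]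
          · simp [hμh, h]
      _ = ∑ e ∈ Sh, wh e := by
          rw [Finset.sum_ite_mem, Finset.univ_inter]
  have hrhs : ∑ e, ∑ c, μt e c * U e c = ∑ e ∈ St, wt e := by
    calc ∑ e, ∑ c, μt e c * U e c
        = ∑ e, (if e ∈ St then wt e else 0) := by
          apply Finset.sum_congr rfl
          intro e _
          by_cases h : e ∈ St
          · rw [if_pos h, hwt]
            apply Finset.sum_congr rfl
            intro c _
            rw [hμt, if_pos h, hγt_mul]
          · simp [hμt, h]
      _ = ∑ e ∈ St, wt e := by
          rw [Finset.sum_ite_mem, Finset.univ_inter]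
  rw [hlhs, hrhs]
  calc ∑ e ∈ Sh, wh e ≤ ∑ e ∈ Sh, wt e := Finset.sum_le_sum fun e _ => key e
    _ ≤ ∑ e ∈ St, wt e := hStMax Sh hShInd
end
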